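/- Let L̄ ∈ ℝ^{n×n} be the Laplacian of a symmetric nonnegative matrix with zero diagonal whose associated graph is connected, and let H_1, …, H_n ∈ ℝ^{m×m} be symmetric positive semidefinite matrices with ∑_{i=1}^n H_i positive definite. Then (L̄ ⊗ I_m) + diag(H_1,…,H_n) is symmetric positive definite. -/

import Mathlib

open Matrix BigOperators
open scoped Kronecker

/-- The Laplacian of a matrix `A`: `L = D - A` with `D = diag(row sums of A)`. -/
noncomputable def graphLaplacian {n : ℕ} (A : Matrix (Fin n) (Fin n) ℝ) :
    Matrix (Fin n) (Fin n) ℝ :=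
  Matrix.diagonal (fun i => ∑ j, A i j) - A

/-- Connectivity of the graph associated to a nonnegative matrix `A`. -/
def graphConnected {n : ℕ} (A : Matrix (Fin n) (Fin n) ℝ) : Prop :=
  ∀ i j : Fin n, Relation.ReflTransGen (fun a b => a ≠ b ∧ 0 < A a b) i j

/-- The block diagonal matrix `diag(H_1, …, H_n)` acting on `ℝ^{nm}`. -/
def blockDiag {n m : ℕ} (H : Fin n → Matrix (Fin m) (Fin m) ℝ) :
    Matrix (Fin n × Fin m) (Fin n × Fin m) ℝ :=
  fun p q => if p.1 = q.1 then H p.1 p.2 q.2 else 0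

lemma lap_qf {n : ℕ} (A : Matrix (Fin n) (Fin n) ℝ) (hsym : A.IsSymm)
    (y : Fin n → ℝ) :
    y ⬝ᵥ (graphLaplacian A *ᵥ y) = (∑ i, ∑ j, A i j * (y i - y j)^2) / 2 := by
  have hswap : ∑ i, ∑ j, A i j * (y j)^2 = ∑ i, ∑ j, A i j * (y i)^2 := by
    rw [Finset.sum_comm]
    refine Finset.sum_congr rfl fun j _ => Finset.sum_congr rfl fun i _ => ?_
    rw [hsym.apply]
  have hrhs : ∑ i, ∑ j, A i j * (y i - y j)^2
      = 2 * (∑ i, ∑ j, A i j * (y i)^2) - 2 * (∑ i, ∑ j, A i j * (y i * y j)) := by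
    have e : ∀ i j : Fin n, A i j * (y i - y j)^2
        = A i j * (y i)^2 + A i j * (y j)^2 - 2 * (A i j * (y i * y j)) := by
      intro i j; ring
    simp only [e, Finset.sum_sub_distrib, Finset.sum_add_distrib, ← Finset.mul_sum, hswap]
    ring
  have h1 : y ⬝ᵥ ((Matrix.diagonal fun i => ∑ j, A i j) *ᵥ y)
      = ∑ i, ∑ j, A i j * (y i)^2 := by
    simp only [dotProduct, mulVec_diagonal]
    refine Finset.sum_congr rfl fun i _ => ?_
    rw [Finset.sum_mul, Finset.mul_sum]
    exact Finset.sum_congr rfl fun j _ => by ring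
  have h2 : y ⬝ᵥ (A *ᵥ y) = ∑ i, ∑ j, A i j * (y i * y j) := by
    simp only [dotProduct, mulVec]
    refine Finset.sum_congr rfl fun i _ => ?_
    rw [Finset.mul_sum]
    exact Finset.sum_congr rfl fun j _ => by ring
  rw [graphLaplacian, sub_mulVec, dotProduct_sub, h1, h2, hrhs]; ring

lemma kron_qf {n m : ℕ} (L : Matrix (Fin n) (Fin n) ℝ)
    (x : Fin n × Fin m → ℝ) :
    x ⬝ᵥ ((L ⊗ₖ (1 : Matrix (Fin m) (Fin m) ℝ)) *ᵥ x)
      = ∑ k, (fun i => x (i, k)) ⬝ᵥ (L *ᵥ fun i => x (i, k)) := by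
  simp only [dotProduct, mulVec, kroneckerMap_apply, one_apply, Fintype.sum_prod_type,
    mul_ite, mul_one, mul_zero, ite_mul, zero_mul, Finset.sum_ite_eq, Finset.mem_univ, if_true]
  exact Finset.sum_comm

lemma blockDiag_qf {n m : ℕ} (H : Fin n → Matrix (Fin m) (Fin m) ℝ)
    (x : Fin n × Fin m → ℝ) :
    x ⬝ᵥ ((blockDiag H : Matrix (Fin n × Fin m) (Fin n × Fin m) ℝ) *ᵥ x)
      = ∑ i, (fun k => x (i, k)) ⬝ᵥ (H i *ᵥ fun k => x (i, k)) := by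
  simp only [dotProduct, mulVec, _root_.blockDiag, Fintype.sum_prod_type, ite_mul, zero_mul,
    Finset.sum_ite_irrel, Finset.sum_const_zero, Finset.sum_ite_eq, Finset.mem_univ, if_true]

lemma sum_mulVec' {n m : ℕ} (H : Fin n → Matrix (Fin m) (Fin m) ℝ) (v : Fin m → ℝ) :
    (∑ i, H i) *ᵥ v = ∑ i, H i *ᵥ v := by
  funext k
  simp only [mulVec, dotProduct, Matrix.sum_apply, Finset.sum_mul, Finset.sum_apply]
  exact Finset.sum_comm

lemma sum_qf {n m : ℕ} (H : Fin n → Matrix (Fin m) (Fin m) ℝ) (v : Fin m → ℝ) :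
    v ⬝ᵥ ((∑ i, H i) *ᵥ v) = ∑ i, v ⬝ᵥ (H i *ᵥ v) := by
  rw [sum_mulVec']
  simp only [dotProduct, Finset.sum_apply, Finset.mul_sum]
  exact Finset.sum_comm

theorem statement11 {n m : ℕ} (A : Matrix (Fin n) (Fin n) ℝ)
    (hsym : A.IsSymm) (hnn : ∀ i j, 0 ≤ A i j) (hdiag : ∀ i, A i i = 0)
    (hconn : graphConnected A)
    (H : Fin n → Matrix (Fin m) (Fin m) ℝ)
    (hH : ∀ i, (H i).PosSemidef) (hHsum : (∑ i, H i).PosDef) :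
    (graphLaplacian A ⊗ₖ (1 : Matrix (Fin m) (Fin m) ℝ) + blockDiag H).PosDef := by
  have hL : ∀ i j, graphLaplacian A i j = graphLaplacian A j i := by
    intro i j
    simp only [graphLaplacian, Matrix.sub_apply, Matrix.diagonal_apply]
    rcases eq_or_ne i j with h | h
    · subst h; rfl
    · rw [if_neg h, if_neg (Ne.symm h), hsym.apply]
  have hHs : ∀ i a b, H i a b = H i b a := by
    intro i a b
    have h := congrFun (congrFun (hH i).1 a) b
    simpa using h.symm
  rw [posDef_iff_dotProduct_mulVec]
  constructor
  · show _ᴴ = _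
    ext ⟨i, k⟩ ⟨j, l⟩
    simp only [conjTranspose_apply, Matrix.add_apply, kroneckerMap_apply, one_apply,
      _root_.blockDiag, star_trivial]
    congr 1
    · rw [hL j i]
      rcases eq_or_ne k l with h | h
      · simp [h]
      · simp [h, Ne.symm h]
    · rcases eq_or_ne i j with h | h
      · subst h; simp [hHs]
      · simp [h, Ne.symm h]
  · intro x hx
    have hstar : star x = x := by simp
    rw [hstar, add_mulVec, dotProduct_add, kron_qf, blockDiag_qf]
    have hQLnn : ∀ k : Fin m,
        0 ≤ (fun i => x (i, k)) ⬝ᵥ (graphLaplacian A *ᵥ fun i => x (i, k)) := by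
      intro k
      rw [lap_qf A hsym]
      apply div_nonneg _ (by norm_num)
      exact Finset.sum_nonneg fun i _ => Finset.sum_nonneg fun j _ =>
        mul_nonneg (hnn i j) (sq_nonneg _)
    have hQHnn : ∀ i, 0 ≤ (fun k => x (i, k)) ⬝ᵥ (H i *ᵥ fun k => x (i, k)) := by
      intro i
      have h := (posSemidef_iff_dotProduct_mulVec.mp (hH i)).2 (fun k => x (i, k))
      simpa using h
    have hsum1 : 0 ≤ ∑ k, (fun i => x (i, k)) ⬝ᵥ (graphLaplacian A *ᵥ fun i => x (i, k)) :=
      Finset.sum_nonneg fun k _ => hQLnn k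
    have hsum2 : 0 ≤ ∑ i, (fun k => x (i, k)) ⬝ᵥ (H i *ᵥ fun k => x (i, k)) :=
      Finset.sum_nonneg fun i _ => hQHnn i
    rcases lt_or_eq_of_le (add_nonneg hsum1 hsum2) with h | h
    · exact h
    · exfalso
      have h1 : ∑ k, (fun i => x (i, k)) ⬝ᵥ (graphLaplacian A *ᵥ fun i => x (i, k)) = 0 := by
        linarith
      have h2 : ∑ i, (fun k => x (i, k)) ⬝ᵥ (H i *ᵥ fun k => x (i, k)) = 0 := by
        linarith
      have hQL0 : ∀ k : Fin m,
          (fun i => x (i, k)) ⬝ᵥ (graphLaplacian A *ᵥ fun i => x (i, k)) = 0 := fun k =>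
        (Finset.sum_eq_zero_iff_of_nonneg fun k _ => hQLnn k).mp h1 k (Finset.mem_univ k)
      have hconst : ∀ i j : Fin n, ∀ k : Fin m, x (i, k) = x (j, k) := by
        intro i j k
        have hk := hQL0 k
        rw [lap_qf A hsym] at hk
        have hk' : ∑ a, ∑ b, A a b * (x (a, k) - x (b, k))^2 = 0 := by linarith
        have hterm : ∀ a b : Fin n, A a b * (x (a, k) - x (b, k))^2 = 0 := by
          intro a b
          have h5 := (Finset.sum_eq_zero_iff_of_nonneg fun a _ =>
            Finset.sum_nonneg fun b _ => mul_nonneg (hnn a b) (sq_nonneg _)).mp hk' a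
            (Finset.mem_univ a)
          exact (Finset.sum_eq_zero_iff_of_nonneg fun b _ =>
            mul_nonneg (hnn a b) (sq_nonneg _)).mp h5 b (Finset.mem_univ b)
        have hstep : ∀ a b : Fin n, (a ≠ b ∧ 0 < A a b) → x (a, k) = x (b, k) := by
          rintro a b ⟨-, hab⟩
          have h6 : (x (a, k) - x (b, k))^2 = 0 := by
            rcases mul_eq_zero.mp (hterm a b) with h' | h'
            · exact absurd h' (ne_of_gt hab)
            · exact h'
          have := sq_eq_zero_iff.mp h6
          linarith
        induction hconn i j with
        | refl => rfl
        | tail _ hrel ih => exact ih.trans (hstep _ _ hrel)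
      obtain ⟨p, hp⟩ := Function.ne_iff.mp hx
      have hvne : (fun k => x (p.1, k)) ≠ 0 := by
        intro hh
        apply hp
        have h7 := congrFun hh p.2
        simpa using h7
      have hpos := (posDef_iff_dotProduct_mulVec.mp hHsum).2 hvne
      rw [show star (fun k => x (p.1, k)) = fun k => x (p.1, k) by simp, sum_qf] at hpos
      have heq : ∑ i, (fun k => x (p.1, k)) ⬝ᵥ (H i *ᵥ fun k => x (p.1, k))
          = ∑ i, (fun k => x (i, k)) ⬝ᵥ (H i *ᵥ fun k => x (i, k)) := by
        refine Finset.sum_congr rfl fun i _ => ?_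
        have h8 : (fun k => x (p.1, k)) = fun k => x (i, k) :=
          funext fun k => hconst p.1 i k
        rw [h8]
      rw [heq] at hpos
      linarith
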